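/- Let (X, 𝓕) be а measurable space, ν a σ-finite measure on it, (Ω, 𝓒, ℙ) a probability space, and V : L²(X, ν; ℝ) → L²(Ω, ℙ; ℝ) a linear isometry. Let μ be a σ-finite measure on (X, 𝓕) with μ ≪ ν, and for each A ∈ 𝓕 with μ(A) < ∞ set W^{(μ)}_A := V(1_A · √(dμ/dν)) (the function 1_A · √(dμ/dν) lies in L²(X, ν) since ∫_A (dμ/dν) dν = μ(A) < ∞). Then E[W^{(μ)}_A · W^{(μ)}_B] = μ(A ∩ B) for all A, B ∈ 𝓕 with μ(A) < ∞ and μ(B) < ∞; that is, W^{(μ)} is a μ-Brownian motion. -/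

import Mathlib

open MeasureTheory

/-- If `V : L²(X, ν) → L²(Ω, P)` is a linear isometry and `μ ≪ ν`, then
`W^{(μ)}_A := V(1_A √(dμ/dν))` has covariance `E[W^{(μ)}_A W^{(μ)}_B] = μ(A ∩ B)`,
i.e. `W^{(μ)}` is a `μ`-Brownian motion. -/
theorem stmt14 {X : Type*} [MeasurableSpace X] (ν : Measure X) [SigmaFinite ν]
    {Ω : Type*} [MeasurableSpace Ω] (P : Measure Ω) [IsProbabilityMeasure P]
    (V : Lp ℝ 2 ν →ₗᵢ[ℝ] Lp ℝ 2 P)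
    (μ : Measure X) [SigmaFinite μ] (hac : μ ≪ ν)
    (A B : Set X) (hA : MeasurableSet A) (hB : MeasurableSet B)
    (hμA : μ A < ⊤) (hμB : μ B < ⊤)
    (gA gB : Lp ℝ 2 ν)
    (hgA : (gA : X → ℝ) =ᵐ[ν] A.indicator fun x => Real.sqrt ((μ.rnDeriv ν x).toReal))
    (hgB : (gB : X → ℝ) =ᵐ[ν] B.indicator fun x => Real.sqrt ((μ.rnDeriv ν x).toReal)) :
    ∫ ω, V gA ω * V gB ω ∂P = (μ (A ∩ B)).toReal := by
  have h1 : ∫ ω, V gA ω * V gB ω ∂P = (inner ℝ (V gA) (V gB) : ℝ) := by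
    rw [L2.inner_def]; simp [mul_comm]
  have h2 : (inner ℝ (V gA) (V gB) : ℝ) = (inner ℝ gA gB : ℝ) := V.inner_map_map gA gB
  have h3 : (inner ℝ gA gB : ℝ) = ∫ x, gA x * gB x ∂ν := by
    rw [L2.inner_def]; simp [mul_comm]
  have h4 : (fun x => gA x * gB x) =ᵐ[ν]
      (A ∩ B).indicator fun x => (μ.rnDeriv ν x).toReal := by
    filter_upwards [hgA, hgB] with x hxA hxB
    rw [hxA, hxB]
    by_cases hxa : x ∈ A <;> by_cases hxb : x ∈ B <;>
      simp [Set.indicator_of_mem, Set.indicator_of_notMem, hxa, hxb,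
        Set.mem_inter_iff, Real.mul_self_sqrt ENNReal.toReal_nonneg]
  rw [h1, h2, h3, integral_congr_ae h4, integral_indicator (hA.inter hB),
    Measure.setIntegral_toReal_rnDeriv hac]
  rfl
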